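/- arXiv:1711.09459 — 5 statements merged into one kernel-verified Lean document; each statement's English description precedes it below -/
import Mathlib

section
/- Let G = (G_1,…,G_g) be a linearly independent tuple of d×e complex matrices, let C be an e×d complex matrix, and let Ψ = (Ψ_1,…,Ψ_g) be a tuple of g×g complex matrices such that G_ℓ C G_j = Σ_{s=1}^g (Ψ_j)_{ℓ,s} G_s for all 1 ≤ ℓ, j ≤ g. Then Ψ is convexotonic, i.e., Ψ_k Ψ_j = Σ_{s=1}^g (Ψ_j)_{k,s} Ψ_s for all 1 ≤ j,k ≤ g. In particular, if J = (J_1,…,J_g) ∈ M_d(ℂ)^g is linearly independent and the span of J_1,…,J_g is closed under multiplication, then the unique tuple Ψ determined by J_k J_j = Σ_{s=1}^g (Ψ_j)_{k,s} J_s is convexotonic. -/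
open scoped Kronecker Matrix Matrix.Norms.L2Operator ComplexOrder

noncomputable section

/-- `Λ_A(X) = Σⱼ Aⱼ ⊗ Xⱼ` (Kronecker product), a `dn × dn` matrix. -/
def lamK {g d n : ℕ} (A : Fin g → Matrix (Fin d) (Fin d) ℂ)
    (X : Fin g → Matrix (Fin n) (Fin n) ℂ) :
    Matrix (Fin d × Fin n) (Fin d × Fin n) ℂ :=
  ∑ j, (A j) ⊗ₖ (X j)

/-- `L_A(X) = I + Λ_A(X) + Λ_A(X)^*`. -/
def Lpen {g d n : ℕ} (A : Fin g → Matrix (Fin d) (Fin d) ℂ)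
    (X : Fin g → Matrix (Fin n) (Fin n) ℂ) :
    Matrix (Fin d × Fin n) (Fin d × Fin n) ℂ :=
  1 + lamK A X + (lamK A X)ᴴ

/-- The `n × n` block of a `gn × gn` matrix in position `(j, i)`. -/
def blk {g n : ℕ} (M : Matrix (Fin g × Fin n) (Fin g × Fin n) ℂ) (j i : Fin g) :
    Matrix (Fin n) (Fin n) ℂ :=
  fun a b => M (j, a) (i, b)

/-- The convexotonic map `p(X) = X (I - Λ_Ξ(X))⁻¹`, given blockwise by
`p(X)ᵢ = Σⱼ Xⱼ [(I - Λ_Ξ(X))⁻¹]_{j,i}`. -/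
def pmap {g n : ℕ} (Ξ : Fin g → Matrix (Fin g) (Fin g) ℂ)
    (X : Fin g → Matrix (Fin n) (Fin n) ℂ) : Fin g → Matrix (Fin n) (Fin n) ℂ :=
  fun i => ∑ j, X j * blk ((1 - lamK Ξ X)⁻¹) j i

/-- The convexotonic map `q(X) = X (I + Λ_Ξ(X))⁻¹`, given blockwise by
`q(X)ᵢ = Σⱼ Xⱼ [(I + Λ_Ξ(X))⁻¹]_{j,i}`. -/
def qmap {g n : ℕ} (Ξ : Fin g → Matrix (Fin g) (Fin g) ℂ)
    (X : Fin g → Matrix (Fin n) (Fin n) ℂ) : Fin g → Matrix (Fin n) (Fin n) ℂ :=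
  fun i => ∑ j, X j * blk ((1 + lamK Ξ X)⁻¹) j i

/-- A tuple `Ξ` of `g × g` matrices is convexotonic if
`Ξ_k Ξ_j = Σ_s (Ξ_j)_{k,s} Ξ_s` for all `j, k`. -/
def Convexotonic {g : ℕ} (Ξ : Fin g → Matrix (Fin g) (Fin g) ℂ) : Prop :=
  ∀ j k, Ξ k * Ξ j = ∑ s, (Ξ j) k s • Ξ s

/-- `Λ_A(α) = Σⱼ αⱼ Aⱼ` for a scalar point `α ∈ ℂ^g`. -/
def lamScalar {g d : ℕ} (A : Fin g → Matrix (Fin d) (Fin d) ℂ) (α : Fin g → ℂ) :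
    Matrix (Fin d) (Fin d) ℂ :=
  ∑ j, α j • A j

/-- A hyperbasis of `ℂ^d`: `d+1` vectors, each `d` of which form a basis. -/
def Hyperbasis {d : ℕ} (u : Fin (d + 1) → (Fin d → ℂ)) : Prop :=
  ∀ i : Fin (d + 1),
    LinearIndependent ℂ (fun j : {j : Fin (d + 1) // j ≠ i} => u j) ∧
    Submodule.span ℂ (Set.range fun j : {j : Fin (d + 1) // j ≠ i} => u j) = ⊤

/-- The tuple `A ∈ M_d(ℂ)^g` is sv-generic. -/
def SvGeneric {g d : ℕ} (A : Fin g → Matrix (Fin d) (Fin d) ℂ) : Prop :=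
  (∃ (α : Fin (d + 1) → (Fin g → ℂ)) (u : Fin (d + 1) → (Fin d → ℂ)),
    (∀ j, (1 - (lamScalar A (α j))ᴴ * lamScalar A (α j)).PosSemidef ∧
      u j ≠ 0 ∧
      LinearMap.ker (Matrix.mulVecLin (1 - (lamScalar A (α j))ᴴ * lamScalar A (α j)))
        = Submodule.span ℂ {u j}) ∧
    Hyperbasis u) ∧
  (∃ (β : Fin d → (Fin g → ℂ)) (v : Fin d → (Fin d → ℂ)),
    (∀ k, (1 - lamScalar A (β k) * (lamScalar A (β k))ᴴ).PosSemidef ∧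
      v k ≠ 0 ∧
      LinearMap.ker (Matrix.mulVecLin (1 - lamScalar A (β k) * (lamScalar A (β k))ᴴ))
        = Submodule.span ℂ {v k}) ∧
    LinearIndependent ℂ v ∧ Submodule.span ℂ (Set.range v) = ⊤)

/-- Evaluation of a `k × l` matrix of noncommutative polynomials at a tuple of
`n × n` matrices, yielding a `kn × ln` matrix. -/
def polyEval {k l g n : ℕ} (Q : Matrix (Fin k) (Fin l) (FreeAlgebra ℂ (Fin g)))
    (X : Fin g → Matrix (Fin n) (Fin n) ℂ) :
    Matrix (Fin k × Fin n) (Fin l × Fin n) ℂ :=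
  fun a b => (FreeAlgebra.lift ℂ X) (Q a.1 b.1) a.2 b.2

lemma coeff_eq_of_li {g d e : ℕ} {G : Fin g → Matrix (Fin d) (Fin e) ℂ}
    (hG : LinearIndependent ℂ G) (a b : Fin g → ℂ)
    (h : ∑ s, a s • G s = ∑ s, b s • G s) : a = b := by
  have h0 : ∑ s, (a s - b s) • G s = 0 := by
    simp [sub_smul, Finset.sum_sub_distrib, h]
  have := Fintype.linearIndependent_iff.mp hG (fun s => a s - b s) h0
  funext s
  exact sub_eq_zero.mp (this s)

lemma convexotonic_aux {g d e : ℕ}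
    (G : Fin g → Matrix (Fin d) (Fin e) ℂ) (C : Matrix (Fin e) (Fin d) ℂ)
    (Ψ : Fin g → Matrix (Fin g) (Fin g) ℂ)
    (hG : LinearIndependent ℂ G)
    (hΨ : ∀ ℓ j, G ℓ * C * G j = ∑ s, (Ψ j) ℓ s • G s) :
    Convexotonic Ψ := by
  intro j k
  ext ℓ t
  have h1 : G ℓ * C * G k * C * G j = ∑ t, (∑ s, (Ψ j) k s * (Ψ s) ℓ t) • G t := by
    calc G ℓ * C * G k * C * G j = G ℓ * C * (G k * C * G j) := by
          simp only [Matrix.mul_assoc]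
      _ = G ℓ * C * (∑ s, (Ψ j) k s • G s) := by rw [hΨ k j]
      _ = ∑ s, (Ψ j) k s • (G ℓ * C * G s) := by
          rw [Matrix.mul_sum]; exact Finset.sum_congr rfl fun s _ => by
            rw [Matrix.mul_smul]
      _ = ∑ s, (Ψ j) k s • ∑ t, (Ψ s) ℓ t • G t := by
          exact Finset.sum_congr rfl fun s _ => by rw [hΨ ℓ s]
      _ = ∑ s, ∑ t, ((Ψ j) k s * (Ψ s) ℓ t) • G t := by
          exact Finset.sum_congr rfl fun s _ => by
            rw [Finset.smul_sum]; simp [smul_smul]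
      _ = ∑ t, (∑ s, (Ψ j) k s * (Ψ s) ℓ t) • G t := by
          rw [Finset.sum_comm]
          exact Finset.sum_congr rfl fun t _ => by rw [Finset.sum_smul]
  have h2 : G ℓ * C * G k * C * G j = ∑ t, (∑ s, (Ψ k) ℓ s * (Ψ j) s t) • G t := by
    calc G ℓ * C * G k * C * G j = (∑ s, (Ψ k) ℓ s • G s) * C * G j := by rw [hΨ ℓ k]
      _ = ∑ s, (Ψ k) ℓ s • (G s * C * G j) := by
          rw [Matrix.sum_mul, Matrix.sum_mul]
          exact Finset.sum_congr rfl fun s _ => by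
            rw [Matrix.smul_mul, Matrix.smul_mul]
      _ = ∑ s, (Ψ k) ℓ s • ∑ t, (Ψ j) s t • G t := by
          exact Finset.sum_congr rfl fun s _ => by rw [hΨ s j]
      _ = ∑ s, ∑ t, ((Ψ k) ℓ s * (Ψ j) s t) • G t := by
          exact Finset.sum_congr rfl fun s _ => by
            rw [Finset.smul_sum]; simp [smul_smul]
      _ = ∑ t, (∑ s, (Ψ k) ℓ s * (Ψ j) s t) • G t := by
          rw [Finset.sum_comm]
          exact Finset.sum_congr rfl fun t _ => by rw [Finset.sum_smul]
  have hc := congrFun (coeff_eq_of_li hG _ _ (h2.symm.trans h1)) t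
  simpa [Matrix.mul_apply, Matrix.sum_apply] using hc

/-- if the tuple `G` of `d × e` matrices is linearly independent,
`C` is `e × d`, and `G_ℓ C G_j = Σ_s (Ψ_j)_{ℓ,s} G_s`, then `Ψ` is convexotonic.
In particular, if `J ∈ M_d(ℂ)^g` is linearly independent and its span is closed
under multiplication, the unique tuple `Ψ'` with `J_k J_j = Σ_s (Ψ'_j)_{k,s} J_s`
is convexotonic. -/
theorem convexotonic_from_algebra {g d e : ℕ}
    (G : Fin g → Matrix (Fin d) (Fin e) ℂ) (C : Matrix (Fin e) (Fin d) ℂ)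
    (Ψ : Fin g → Matrix (Fin g) (Fin g) ℂ)
    (hG : LinearIndependent ℂ G)
    (hΨ : ∀ ℓ j, G ℓ * C * G j = ∑ s, (Ψ j) ℓ s • G s) :
    Convexotonic Ψ ∧
    ∀ (J : Fin g → Matrix (Fin d) (Fin d) ℂ), LinearIndependent ℂ J →
      (∀ k j, J k * J j ∈ Submodule.span ℂ (Set.range J)) →
      ∃! Ψ' : Fin g → Matrix (Fin g) (Fin g) ℂ,
        (∀ k j, J k * J j = ∑ s, (Ψ' j) k s • J s) ∧ Convexotonic Ψ' := by
  refine ⟨convexotonic_aux G C Ψ hG hΨ, ?_⟩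
  intro J hJ hclosed
  have hsp : Submodule.span ℂ (Set.range J) = Submodule.span ℂ (Set.range J) := rfl
  let b : Module.Basis (Fin g) ℂ ↥(Submodule.span ℂ (Set.range J)) := Module.Basis.span hJ
  set Ψ' : Fin g → Matrix (Fin g) (Fin g) ℂ :=
    fun j => Matrix.of fun k s => b.repr ⟨J k * J j, hclosed k j⟩ s with hΨ'def
  have key : ∀ k j, J k * J j = ∑ s, (Ψ' j) k s • J s := by
    intro k j
    have h := congrArg Subtype.val (b.sum_repr ⟨J k * J j, hclosed k j⟩)
    have h2 : (∑ i, (b.repr ⟨J k * J j, hclosed k j⟩) i • (b i : Matrix (Fin d) (Fin d) ℂ))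
        = J k * J j := by simpa only [Submodule.coe_sum, Submodule.coe_smul] using h
    rw [← h2]
    simp [b, Module.Basis.span_apply, hΨ'def]
  refine ⟨Ψ', ⟨key, convexotonic_aux J 1 Ψ' hJ (fun ℓ j => by simpa using key ℓ j)⟩, ?_⟩
  rintro Ψ'' ⟨h1, -⟩
  funext j
  ext k s
  exact congrFun (coeff_eq_of_li hJ (fun s => Ψ'' j k s) (fun s => Ψ' j k s)
    ((h1 k j).symm.trans (key k j))) s
end
end

section
/- Let T be a d×d complex matrix. (a) I + T + T^* is positive semidefinite if and only if I + T is invertible and ‖(I+T)^{-1}T‖ ≤ 1. (b) I + T + T^* is positive definite if and only if I + T is invertible and ‖(I+T)^{-1}T‖ < 1. -/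
open scoped Kronecker Matrix Matrix.Norms.L2Operator ComplexOrder

noncomputable section

namespace PsdAux

open Matrix

variable {d : ℕ}

abbrev e (v : Fin d → ℂ) : EuclideanSpace ℂ (Fin d) := (WithLp.equiv 2 _).symm v

lemma key_identity (T : Matrix (Fin d) (Fin d) ℂ) :
    1 + T + Tᴴ = (1 + T)ᴴ * (1 + T) - Tᴴ * T := by
  rw [Matrix.conjTranspose_add, Matrix.conjTranspose_one]
  noncomm_ring

lemma dot_conjTranspose_mul_self (A : Matrix (Fin d) (Fin d) ℂ) (x : Fin d → ℂ) :
    star x ⬝ᵥ ((Aᴴ * A) *ᵥ x) = star (A *ᵥ x) ⬝ᵥ (A *ᵥ x) := by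
  rw [← mulVec_mulVec, dotProduct_mulVec, vecMul_conjTranspose, star_star]

lemma dot_self_eq (v : Fin d → ℂ) :
    star v ⬝ᵥ v = ((‖e v‖ ^ 2 : ℝ) : ℂ) := by
  rw [dotProduct_comm, ← EuclideanSpace.inner_toLp_toLp]
  exact_mod_cast inner_self_eq_norm_sq_to_K (𝕜 := ℂ) (e v)

lemma form_eq (T : Matrix (Fin d) (Fin d) ℂ) (x : Fin d → ℂ) :
    star x ⬝ᵥ ((1 + T + Tᴴ) *ᵥ x)
      = ((‖e ((1 + T) *ᵥ x)‖ ^ 2 - ‖e (T *ᵥ x)‖ ^ 2 : ℝ) : ℂ) := by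
  rw [key_identity T, Matrix.sub_mulVec, dotProduct_sub,
    dot_conjTranspose_mul_self, dot_conjTranspose_mul_self, dot_self_eq, dot_self_eq]
  push_cast
  ring

lemma herm (T : Matrix (Fin d) (Fin d) ℂ) : (1 + T + Tᴴ).IsHermitian := by
  unfold Matrix.IsHermitian
  rw [Matrix.conjTranspose_add, Matrix.conjTranspose_add, Matrix.conjTranspose_one,
    Matrix.conjTranspose_conjTranspose]
  abel

lemma psd_iff (T : Matrix (Fin d) (Fin d) ℂ) :
    (1 + T + Tᴴ).PosSemidef ↔ ∀ x, ‖e (T *ᵥ x)‖ ≤ ‖e ((1 + T) *ᵥ x)‖ := by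
  constructor
  · intro h x
    have h2 := h.dotProduct_mulVec_nonneg x
    rw [form_eq, Complex.zero_le_real, sub_nonneg] at h2
    exact (pow_le_pow_iff_left₀ (norm_nonneg _) (norm_nonneg _) two_ne_zero).mp h2
  · intro h
    refine .of_dotProduct_mulVec_nonneg (herm T) fun x => ?_
    rw [form_eq, Complex.zero_le_real, sub_nonneg]
    exact pow_le_pow_left₀ (norm_nonneg _) (h x) 2

lemma pd_iff (T : Matrix (Fin d) (Fin d) ℂ) :
    (1 + T + Tᴴ).PosDef ↔ ∀ x ≠ 0, ‖e (T *ᵥ x)‖ < ‖e ((1 + T) *ᵥ x)‖ := by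
  constructor
  · intro h x hx
    have h2 := h.dotProduct_mulVec_pos hx
    rw [form_eq, Complex.zero_lt_real, sub_pos] at h2
    exact (pow_lt_pow_iff_left₀ (norm_nonneg _) (norm_nonneg _) two_ne_zero).mp h2
  · intro h
    refine posDef_iff_dotProduct_mulVec.mpr ⟨herm T, fun x hx => ?_⟩
    rw [form_eq, Complex.zero_lt_real, sub_pos]
    exact pow_lt_pow_left₀ (h x hx) (norm_nonneg _) two_ne_zero



lemma clm_apply (C : Matrix (Fin d) (Fin d) ℂ) (v : Fin d → ℂ) :
    Matrix.toEuclideanCLM (n := Fin d) (𝕜 := ℂ) C (e v) = e (C *ᵥ v) := by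
  exact toEuclideanCLM_toLp C v

lemma norm_le_one_iff (C : Matrix (Fin d) (Fin d) ℂ) :
    ‖C‖ ≤ 1 ↔ ∀ v : Fin d → ℂ, ‖e (C *ᵥ v)‖ ≤ ‖e v‖ := by
  rw [Matrix.cstar_norm_def]
  set f := Matrix.toEuclideanCLM (n := Fin d) (𝕜 := ℂ) C with hf
  constructor
  · intro h v
    rw [← clm_apply]
    calc ‖f (e v)‖ ≤ ‖f‖ * ‖e v‖ := f.le_opNorm _
      _ ≤ 1 * ‖e v‖ := by gcongr
      _ = ‖e v‖ := one_mul _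
  · intro h
    refine ContinuousLinearMap.opNorm_le_bound _ zero_le_one fun x => ?_
    rw [one_mul]
    have hx : e ((WithLp.equiv 2 _) x) = x := (WithLp.equiv 2 _).symm_apply_apply x
    have := h ((WithLp.equiv 2 _) x)
    rwa [← clm_apply, hx] at this

lemma norm_lt_one_iff (C : Matrix (Fin d) (Fin d) ℂ) :
    ‖C‖ < 1 ↔ ∀ v : Fin d → ℂ, v ≠ 0 → ‖e (C *ᵥ v)‖ < ‖e v‖ := by
  constructor
  · intro h v hv
    have hv' : (0:ℝ) < ‖e v‖ := by
      rw [norm_pos_iff]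
      exact fun h0 => hv ((WithLp.equiv 2 _).symm.injective (h0.trans rfl))
    have hb : ‖e (C *ᵥ v)‖ ≤ ‖C‖ * ‖e v‖ := by
      rw [← clm_apply, Matrix.cstar_norm_def]
      exact ContinuousLinearMap.le_opNorm _ _
    calc ‖e (C *ᵥ v)‖ ≤ ‖C‖ * ‖e v‖ := hb
      _ < 1 * ‖e v‖ := by gcongr
      _ = ‖e v‖ := one_mul _
  · intro h
    rcases Nat.eq_zero_or_pos d with hd | hd
    · subst hd
      have : C = 0 := Subsingleton.elim _ _
      rw [this, norm_zero]
      exact one_pos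
    · set f := Matrix.toEuclideanCLM (n := Fin d) (𝕜 := ℂ) C with hf
      obtain ⟨y, hy, hmax⟩ := (isCompact_sphere (0 : EuclideanSpace ℂ (Fin d)) 1).exists_isMaxOn
        ⟨EuclideanSpace.single ⟨0, hd⟩ 1, by simp⟩
        ((continuous_norm.comp f.continuous)).continuousOn
      have hy1 : ‖y‖ = 1 := by simpa using hy
      have hy0 : y ≠ 0 := fun h0 => by simp [h0] at hy1
      have hfy : ‖f y‖ < 1 := by
        set u : Fin d → ℂ := WithLp.equiv 2 (Fin d → ℂ) y with hu
        have heu : e u = y := (WithLp.equiv 2 (Fin d → ℂ)).symm_apply_apply y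
        have hv0 : u ≠ 0 := fun h0 => hy0 (by rw [← heu, h0]; rfl)
        have := h u hv0
        rwa [← clm_apply, heu, hy1] at this
      have hb : ‖f‖ ≤ ‖f y‖ := by
        refine ContinuousLinearMap.opNorm_le_bound _ (norm_nonneg _) fun x => ?_
        rcases eq_or_ne x 0 with rfl | hx
        · simp
        · have hu : (‖x‖⁻¹ : ℝ) • x ∈ Metric.sphere (0 : EuclideanSpace ℂ (Fin d)) 1 := by
            simp [norm_smul, norm_pos_iff.mpr hx, abs_of_nonneg (inv_nonneg.mpr (norm_nonneg x)),
              inv_mul_cancel₀ (norm_ne_zero_iff.mpr hx)]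
          have hle := hmax hu
          have hfu : f ((‖x‖⁻¹ : ℝ) • x) = (‖x‖⁻¹ : ℝ) • f x := f.map_smul_of_tower _ _
          simp only [Function.comp_apply, Set.mem_setOf_eq, hfu, norm_smul, Real.norm_eq_abs,
            abs_of_nonneg (inv_nonneg.mpr (norm_nonneg x))] at hle
          have hxpos : (0:ℝ) < ‖x‖ := norm_pos_iff.mpr hx
          calc ‖f x‖ = ‖x‖ * (‖x‖⁻¹ * ‖f x‖) := by field_simp
            _ ≤ ‖x‖ * ‖f y‖ := by gcongr
            _ = ‖f y‖ * ‖x‖ := mul_comm _ _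
      calc ‖C‖ = ‖f‖ := Matrix.cstar_norm_def C
        _ ≤ ‖f y‖ := hb
        _ < 1 := hfy

end PsdAux

namespace PsdAux

open Matrix

variable {d : ℕ}

lemma comm_lemma (T : Matrix (Fin d) (Fin d) ℂ) (hS : IsUnit (1 + T)) :
    ((1 + T)⁻¹ * T) * (1 + T) = T := by
  have hdet : IsUnit (1 + T).det := (Matrix.isUnit_iff_isUnit_det _).mp hS
  have hcomm : T * (1 + T) = (1 + T) * T := by noncomm_ring
  rw [Matrix.mul_assoc, hcomm, ← Matrix.mul_assoc, Matrix.nonsing_inv_mul _ hdet, one_mul]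

lemma mulVec_neg_self (T : Matrix (Fin d) (Fin d) ℂ) {v : Fin d → ℂ}
    (hva : (1 + T) *ᵥ v = 0) : T *ᵥ v = -v := by
  rw [Matrix.add_mulVec, Matrix.one_mulVec] at hva
  linear_combination (norm := module) hva

lemma isUnit_of_psd (T : Matrix (Fin d) (Fin d) ℂ)
    (h : ∀ x, ‖e (T *ᵥ x)‖ ≤ ‖e ((1 + T) *ᵥ x)‖) : IsUnit (1 + T) := by
  rw [Matrix.isUnit_iff_isUnit_det, isUnit_iff_ne_zero]
  intro hdet
  obtain ⟨v, hv0, hva⟩ := Matrix.exists_mulVec_eq_zero_iff.mpr hdet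
  have hT : T *ᵥ v = -v := mulVec_neg_self T hva
  have := h v
  rw [hva, hT] at this
  have h1 : ‖e (-v)‖ = ‖e v‖ := by
    have : e (-v) = -(e v) := rfl
    rw [this, norm_neg]
  have h2 : ‖e (0 : Fin d → ℂ)‖ = 0 := by
    have : e (0 : Fin d → ℂ) = 0 := rfl
    rw [this, norm_zero]
  rw [h1, h2] at this
  exact hv0 ((WithLp.equiv 2 (Fin d → ℂ)).symm.injective
    ((norm_le_zero_iff.mp this).trans rfl))

lemma isUnit_of_pd (T : Matrix (Fin d) (Fin d) ℂ)
    (h : ∀ x, x ≠ 0 → ‖e (T *ᵥ x)‖ < ‖e ((1 + T) *ᵥ x)‖) : IsUnit (1 + T) := by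
  rw [Matrix.isUnit_iff_isUnit_det, isUnit_iff_ne_zero]
  intro hdet
  obtain ⟨v, hv0, hva⟩ := Matrix.exists_mulVec_eq_zero_iff.mpr hdet
  have := h v hv0
  rw [hva] at this
  have h2 : ‖e (0 : Fin d → ℂ)‖ = 0 := by
    have : e (0 : Fin d → ℂ) = 0 := rfl
    rw [this, norm_zero]
  rw [h2] at this
  exact (norm_nonneg _).not_gt this

lemma inv_mulVec_cancel (T : Matrix (Fin d) (Fin d) ℂ) (hS : IsUnit (1 + T)) (v : Fin d → ℂ) :
    (1 + T) *ᵥ ((1 + T)⁻¹ *ᵥ v) = v := by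
  have hdet : IsUnit (1 + T).det := (Matrix.isUnit_iff_isUnit_det _).mp hS
  rw [Matrix.mulVec_mulVec, Matrix.mul_nonsing_inv _ hdet, Matrix.one_mulVec]

lemma c_mulVec (T : Matrix (Fin d) (Fin d) ℂ) (hS : IsUnit (1 + T)) (x : Fin d → ℂ) :
    ((1 + T)⁻¹ * T) *ᵥ ((1 + T) *ᵥ x) = T *ᵥ x := by
  rw [Matrix.mulVec_mulVec, comm_lemma T hS]

end PsdAux

theorem psd_iff_contraction' {d : ℕ} (T : Matrix (Fin d) (Fin d) ℂ) :
    ((1 + T + Tᴴ).PosSemidef ↔ IsUnit (1 + T) ∧ ‖(1 + T)⁻¹ * T‖ ≤ 1) ∧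
    ((1 + T + Tᴴ).PosDef ↔ IsUnit (1 + T) ∧ ‖(1 + T)⁻¹ * T‖ < 1) := by
  constructor
  · constructor
    · intro h
      have h' := (PsdAux.psd_iff T).mp h
      have hS : IsUnit (1 + T) := PsdAux.isUnit_of_psd T h'
      refine ⟨hS, ?_⟩
      rw [PsdAux.norm_le_one_iff]
      intro v
      have hv := PsdAux.inv_mulVec_cancel T hS v
      have hc : ((1 + T)⁻¹ * T) *ᵥ v = T *ᵥ ((1 + T)⁻¹ *ᵥ v) := by
        conv_lhs => rw [← hv]
        rw [PsdAux.c_mulVec T hS]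
      rw [hc]
      calc ‖PsdAux.e (T *ᵥ ((1 + T)⁻¹ *ᵥ v))‖ ≤ ‖PsdAux.e ((1 + T) *ᵥ ((1 + T)⁻¹ *ᵥ v))‖ := h' _
        _ = ‖PsdAux.e v‖ := by rw [hv]
    · rintro ⟨hS, hn⟩
      rw [PsdAux.psd_iff]
      intro x
      rw [PsdAux.norm_le_one_iff] at hn
      have := hn ((1 + T) *ᵥ x)
      rwa [PsdAux.c_mulVec T hS] at this
  · constructor
    · intro h
      have h' := (PsdAux.pd_iff T).mp h
      have hS : IsUnit (1 + T) := PsdAux.isUnit_of_pd T h'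
      refine ⟨hS, ?_⟩
      rw [PsdAux.norm_lt_one_iff]
      intro v hv0
      have hv := PsdAux.inv_mulVec_cancel T hS v
      have hx0 : (1 + T)⁻¹ *ᵥ v ≠ 0 := by
        intro h0
        rw [h0, Matrix.mulVec_zero] at hv
        exact hv0 hv.symm
      have hc : ((1 + T)⁻¹ * T) *ᵥ v = T *ᵥ ((1 + T)⁻¹ *ᵥ v) := by
        conv_lhs => rw [← hv]
        rw [PsdAux.c_mulVec T hS]
      rw [hc]
      calc ‖PsdAux.e (T *ᵥ ((1 + T)⁻¹ *ᵥ v))‖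
          < ‖PsdAux.e ((1 + T) *ᵥ ((1 + T)⁻¹ *ᵥ v))‖ := h' _ hx0
        _ = ‖PsdAux.e v‖ := by rw [hv]
    · rintro ⟨hS, hn⟩
      rw [PsdAux.pd_iff]
      intro x hx0
      rw [PsdAux.norm_lt_one_iff] at hn
      have hSx : (1 + T) *ᵥ x ≠ 0 := by
        intro h0
        have := congrArg (fun w => (1 + T)⁻¹ *ᵥ w) h0
        simp only [Matrix.mulVec_mulVec, Matrix.mulVec_zero] at this
        have hdet : IsUnit (1 + T).det := (Matrix.isUnit_iff_isUnit_det _).mp hS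
        rw [Matrix.nonsing_inv_mul _ hdet, Matrix.one_mulVec] at this
        exact hx0 this
      have := hn ((1 + T) *ᵥ x) hSx
      rwa [PsdAux.c_mulVec T hS] at this

/-- `I + T + T^*` is positive semidefinite iff `I + T` is invertible
and `‖(I+T)⁻¹ T‖ ≤ 1`; and `I + T + T^*` is positive definite iff `I + T` is
invertible and `‖(I+T)⁻¹ T‖ < 1`. -/
theorem psd_iff_contraction {d : ℕ} (T : Matrix (Fin d) (Fin d) ℂ) :
    ((1 + T + Tᴴ).PosSemidef ↔ IsUnit (1 + T) ∧ ‖(1 + T)⁻¹ * T‖ ≤ 1) ∧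
    ((1 + T + Tᴴ).PosDef ↔ IsUnit (1 + T) ∧ ‖(1 + T)⁻¹ * T‖ < 1) := by
  exact psd_iff_contraction' T
end
end

section
/- Let F = (F_1,…,F_g) ∈ M_d(ℂ)^g. Then for every n and every X ∈ M_n(ℂ)^g: L_F(X) is positive semidefinite if and only if I + Λ_F(X) is invertible and ‖(I + Λ_F(X))^{-1} Λ_F(X)‖ ≤ 1. In other words, D_F(n) = {X ∈ M_n(ℂ)^g : I + Λ_F(X) invertible and ‖(I+Λ_F(X))^{-1}Λ_F(X)‖ ≤ 1}. -/
open scoped Kronecker Matrix Matrix.Norms.L2Operator ComplexOrder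

noncomputable section

open Matrix in
private lemma dot_eq_normSq {ι : Type*} [Fintype ι] (v : ι → ℂ) :
    star v ⬝ᵥ v = (‖(WithLp.equiv 2 (ι → ℂ)).symm v‖ : ℂ) ^ 2 := by
  rw [dotProduct_comm, ← EuclideanSpace.inner_toLp_toLp, inner_self_eq_norm_sq_to_K]
  norm_cast

open Matrix in
private lemma l2_opNorm_le_one_iff' {ι : Type*} [Fintype ι] [DecidableEq ι]
    (A : Matrix ι ι ℂ) :
    ‖A‖ ≤ 1 ↔ ∀ v : ι → ℂ, star (A *ᵥ v) ⬝ᵥ (A *ᵥ v) ≤ star v ⬝ᵥ v := by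
  constructor
  · intro h v
    rw [dot_eq_normSq, dot_eq_normSq]
    have h1 := A.l2_opNorm_mulVec ((WithLp.equiv 2 (ι → ℂ)).symm v)
    have h2 : ‖A‖ * ‖(WithLp.equiv 2 (ι → ℂ)).symm v‖ ≤
        ‖(WithLp.equiv 2 (ι → ℂ)).symm v‖ := by
      have := norm_nonneg ((WithLp.equiv 2 (ι → ℂ)).symm v)
      nlinarith
    have h3 : ‖(WithLp.equiv 2 (ι → ℂ)).symm (A *ᵥ v)‖ ≤
        ‖(WithLp.equiv 2 (ι → ℂ)).symm v‖ := le_trans h1 h2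
    have h4 := pow_le_pow_left₀ (norm_nonneg _) h3 2
    exact_mod_cast Complex.real_le_real.mpr (by exact_mod_cast h4)
  · intro h
    rw [Matrix.l2_opNorm_def]
    apply ContinuousLinearMap.opNorm_le_bound _ zero_le_one
    intro x
    rw [one_mul]
    have hx := h ((WithLp.equiv 2 (ι → ℂ)) x)
    rw [dot_eq_normSq, dot_eq_normSq] at hx
    have hx' : ‖(WithLp.equiv 2 (ι → ℂ)).symm (A *ᵥ (WithLp.equiv 2 (ι → ℂ)) x)‖ ^ 2 ≤
        ‖(WithLp.equiv 2 (ι → ℂ)).symm ((WithLp.equiv 2 (ι → ℂ)) x)‖ ^ 2 := by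
      exact_mod_cast hx
    have hres := (pow_le_pow_iff_left₀ (norm_nonneg _) (norm_nonneg _) two_ne_zero).mp hx'
    simpa [Matrix.toEuclideanLin_apply] using hres

open Matrix in
private lemma dot_mul_conjTranspose {ι : Type*} [Fintype ι]
    (B : Matrix ι ι ℂ) (v : ι → ℂ) :
    star v ⬝ᵥ ((B * Bᴴ) *ᵥ v) = star (Bᴴ *ᵥ v) ⬝ᵥ (Bᴴ *ᵥ v) := by
  rw [Matrix.star_mulVec, Matrix.conjTranspose_conjTranspose, ← Matrix.mulVec_mulVec,
    Matrix.dotProduct_mulVec]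

/-- `L_F(X)` is positive semidefinite iff `I + Λ_F(X)` is invertible
and `‖(I + Λ_F(X))⁻¹ Λ_F(X)‖ ≤ 1`. -/
theorem spectrahedron_eq_contraction_set {g d : ℕ}
    (F : Fin g → Matrix (Fin d) (Fin d) ℂ) :
    ∀ (n : ℕ) (X : Fin g → Matrix (Fin n) (Fin n) ℂ),
      (Lpen F X).PosSemidef ↔
        IsUnit (1 + lamK F X) ∧ ‖(1 + lamK F X)⁻¹ * lamK F X‖ ≤ 1 := by
  intro n X
  set Λ := lamK F X with hΛ
  set M := 1 + Λ with hM
  have hLM : Lpen F X = M * Mᴴ - Λ * Λᴴ := by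
    rw [Lpen, hM]
    simp only [Matrix.conjTranspose_add, Matrix.conjTranspose_one]
    noncomm_ring
  have key : ∀ v, star v ⬝ᵥ (Lpen F X *ᵥ v) =
      star (Mᴴ *ᵥ v) ⬝ᵥ (Mᴴ *ᵥ v) - star (Λᴴ *ᵥ v) ⬝ᵥ (Λᴴ *ᵥ v) := by
    intro v
    rw [hLM, Matrix.sub_mulVec, dotProduct_sub,
      dot_mul_conjTranspose, dot_mul_conjTranspose]
  have hMH : Mᴴ = 1 + Λᴴ := by
    rw [hM]; simp [Matrix.conjTranspose_add]
  constructor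
  · intro h
    have hMu : IsUnit M := by
      rw [← Matrix.isUnit_conjTranspose, ← Matrix.mulVec_injective_iff_isUnit,
        ← Matrix.coe_mulVecLin]
      rw [injective_iff_map_eq_zero]
      intro v hv
      rw [Matrix.mulVecLin_apply] at hv
      have h0 := h.dotProduct_mulVec_nonneg v
      rw [key v, hv] at h0
      simp only [dotProduct_zero, zero_dotProduct, zero_sub,
        le_neg, neg_zero] at h0
      have h1 : star (Λᴴ *ᵥ v) ⬝ᵥ (Λᴴ *ᵥ v) = 0 :=
        le_antisymm h0 (dotProduct_star_self_nonneg _)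
      have h2 : Λᴴ *ᵥ v = 0 := dotProduct_star_self_eq_zero.mp h1
      have h3 : Mᴴ *ᵥ v = v + Λᴴ *ᵥ v := by
        rw [hMH, Matrix.add_mulVec, Matrix.one_mulVec]
      rw [hv, h2, add_zero] at h3
      exact h3.symm
    refine ⟨hMu, ?_⟩
    have hdet' : IsUnit M.det := (Matrix.isUnit_iff_isUnit_det M).mp hMu
    rw [← Matrix.l2_opNorm_conjTranspose, l2_opNorm_le_one_iff']
    intro v
    have hC : (M⁻¹ * Λ)ᴴ = Λᴴ * (Mᴴ)⁻¹ := by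
      rw [Matrix.conjTranspose_mul, Matrix.conjTranspose_nonsing_inv]
    have h0 := h.dotProduct_mulVec_nonneg ((Mᴴ)⁻¹ *ᵥ v)
    rw [key] at h0
    have hMM : Mᴴ *ᵥ ((Mᴴ)⁻¹ *ᵥ v) = v := by
      rw [Matrix.mulVec_mulVec, Matrix.mul_nonsing_inv, Matrix.one_mulVec]
      rwa [Matrix.det_conjTranspose, isUnit_star]
    rw [hMM] at h0
    rw [hC, ← Matrix.mulVec_mulVec]
    exact sub_nonneg.mp h0
  · rintro ⟨hMu, hnorm⟩
    have hdet' : IsUnit M.det := (Matrix.isUnit_iff_isUnit_det M).mp hMu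
    rw [Matrix.posSemidef_iff_dotProduct_mulVec]
    constructor
    · rw [Lpen]
      simp only [Matrix.IsHermitian, Matrix.conjTranspose_add, Matrix.conjTranspose_one,
        Matrix.conjTranspose_conjTranspose]
      abel
    · intro v
      rw [key v]
      rw [sub_nonneg]
      have hfac : Λᴴ *ᵥ v = (M⁻¹ * Λ)ᴴ *ᵥ (Mᴴ *ᵥ v) := by
        rw [Matrix.mulVec_mulVec, ← Matrix.conjTranspose_mul,
          ← Matrix.mul_assoc, Matrix.mul_nonsing_inv _ hdet', Matrix.one_mul]
      rw [hfac]
      have := (l2_opNorm_le_one_iff' ((M⁻¹ * Λ)ᴴ)).mp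
        (by rw [Matrix.l2_opNorm_conjTranspose]; exact hnorm)
      exact this (Mᴴ *ᵥ v)
end
end

section
/- Let J = (J_1,…,J_g) ∈ M_d(ℂ)^g and Ξ = (Ξ_1,…,Ξ_g) ∈ M_g(ℂ)^g satisfy J_k J_j = Σ_{s=1}^g (Ξ_j)_{k,s} J_s for all 1 ≤ j,k ≤ g. Fix n and X ∈ M_n(ℂ)^g. (i) If I + Λ_Ξ(X) is invertible and q(X) ∈ M_n(ℂ)^g is defined by q(X)_i = Σ_{j=1}^g X_j [(I+Λ_Ξ(X))^{-1}]_{j,i}, then Λ_J(q(X)) · (I + Λ_J(X)) = Λ_J(X). (ii) If I − Λ_Ξ(X) is invertible and p(X) ∈ M_n(ℂ)^g is defined by p(X)_i = Σ_{j=1}^g X_j [(I−Λ_Ξ(X))^{-1}]_{j,i}, then Λ_J(p(X)) · (I − Λ_J(X)) = Λ_J(X). -/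
open scoped Kronecker Matrix Matrix.Norms.L2Operator ComplexOrder

noncomputable section

section Aux

open Matrix Finset

variable {g d n : ℕ}

lemma sum_kronecker {ι : Type*} (s : Finset ι) (A : ι → Matrix (Fin d) (Fin d) ℂ)
    (B : Matrix (Fin n) (Fin n) ℂ) :
    (∑ i ∈ s, A i) ⊗ₖ B = ∑ i ∈ s, (A i) ⊗ₖ B := by
  ext ⟨a, b⟩ ⟨c, e⟩
  simp [Matrix.kroneckerMap_apply, Matrix.sum_apply, Finset.sum_mul]

lemma kronecker_sum' {ι : Type*} (s : Finset ι) (A : Matrix (Fin d) (Fin d) ℂ)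
    (B : ι → Matrix (Fin n) (Fin n) ℂ) :
    A ⊗ₖ (∑ i ∈ s, B i) = ∑ i ∈ s, A ⊗ₖ (B i) := by
  ext ⟨a, b⟩ ⟨c, e⟩
  simp [Matrix.kroneckerMap_apply, Matrix.sum_apply, Finset.mul_sum]

lemma kronecker_sub'' (A : Matrix (Fin d) (Fin d) ℂ)
    (B C : Matrix (Fin n) (Fin n) ℂ) :
    A ⊗ₖ (B - C) = A ⊗ₖ B - A ⊗ₖ C := by
  ext ⟨a, b⟩ ⟨c, e⟩
  simp [Matrix.kroneckerMap_apply, Matrix.sub_apply, mul_sub]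

lemma blk_mul (M N : Matrix (Fin g × Fin n) (Fin g × Fin n) ℂ) (j i : Fin g) :
    blk (M * N) j i = ∑ k, blk M j k * blk N k i := by
  ext a b
  simp [blk, Matrix.mul_apply, Fintype.sum_prod_type, Matrix.sum_apply]

lemma blk_one (j i : Fin g) :
    blk (1 : Matrix (Fin g × Fin n) (Fin g × Fin n) ℂ) j i
      = if j = i then 1 else 0 := by
  ext a b
  by_cases h : j = i <;>
    simp [blk, Matrix.one_apply, Prod.ext_iff, h]

lemma blk_add (M N : Matrix (Fin g × Fin n) (Fin g × Fin n) ℂ) (j i : Fin g) :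
    blk (M + N) j i = blk M j i + blk N j i := rfl

lemma blk_sub (M N : Matrix (Fin g × Fin n) (Fin g × Fin n) ℂ) (j i : Fin g) :
    blk (M - N) j i = blk M j i - blk N j i := rfl

lemma blk_lamK (Ξ : Fin g → Matrix (Fin g) (Fin g) ℂ)
    (X : Fin g → Matrix (Fin n) (Fin n) ℂ) (k s : Fin g) :
    blk (lamK Ξ X) k s = ∑ j, (Ξ j) k s • X j := by
  ext a b
  simp [blk, lamK, Matrix.kroneckerMap_apply, Matrix.sum_apply, Matrix.smul_apply]

lemma lamK_mul_lamK (J : Fin g → Matrix (Fin d) (Fin d) ℂ)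
    (Ξ : Fin g → Matrix (Fin g) (Fin g) ℂ)
    (hΞ : ∀ k j, J k * J j = ∑ s, (Ξ j) k s • J s)
    (Y X : Fin g → Matrix (Fin n) (Fin n) ℂ) :
    lamK J Y * lamK J X = ∑ s, (J s) ⊗ₖ (∑ k, Y k * blk (lamK Ξ X) k s) := by
  have lhs : lamK J Y * lamK J X
      = ∑ k, ∑ j, ∑ s, (Ξ j) k s • ((J s) ⊗ₖ (Y k * X j)) := by
    rw [lamK, lamK, Finset.sum_mul_sum]
    refine Finset.sum_congr rfl fun k _ => Finset.sum_congr rfl fun j _ => ?_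
    rw [← Matrix.mul_kronecker_mul, hΞ k j, sum_kronecker]
    refine Finset.sum_congr rfl fun s _ => ?_
    rw [Matrix.smul_kronecker]
  have rhs : ∑ s, (J s) ⊗ₖ (∑ k, Y k * blk (lamK Ξ X) k s)
      = ∑ s, ∑ k, ∑ j, (Ξ j) k s • ((J s) ⊗ₖ (Y k * X j)) := by
    refine Finset.sum_congr rfl fun s _ => ?_
    rw [kronecker_sum']
    refine Finset.sum_congr rfl fun k _ => ?_
    rw [blk_lamK, Finset.mul_sum]
    rw [kronecker_sum']
    refine Finset.sum_congr rfl fun j _ => ?_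
    rw [mul_smul_comm, Matrix.kronecker_smul]
  rw [lhs, rhs]
  exact (Finset.sum_congr rfl fun k _ => Finset.sum_comm).trans Finset.sum_comm

end Aux

/-- if `J_k J_j = Σ_s (Ξ_j)_{k,s} J_s`, then (i) when `I + Λ_Ξ(X)`
is invertible, `Λ_J(q(X)) (I + Λ_J(X)) = Λ_J(X)`, and (ii) when `I - Λ_Ξ(X)` is
invertible, `Λ_J(p(X)) (I - Λ_J(X)) = Λ_J(X)`. -/
theorem convexotonic_intertwining {g d n : ℕ}
    (J : Fin g → Matrix (Fin d) (Fin d) ℂ)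
    (Ξ : Fin g → Matrix (Fin g) (Fin g) ℂ)
    (hΞ : ∀ k j, J k * J j = ∑ s, (Ξ j) k s • J s)
    (X : Fin g → Matrix (Fin n) (Fin n) ℂ) :
    (IsUnit (1 + lamK Ξ X) →
      lamK J (qmap Ξ X) * (1 + lamK J X) = lamK J X) ∧
    (IsUnit (1 - lamK Ξ X) →
      lamK J (pmap Ξ X) * (1 - lamK J X) = lamK J X) := by
  constructor
  · intro h
    set B := (1 + lamK Ξ X)⁻¹ with hBdef
    have hB : B * (1 + lamK Ξ X) = 1 :=
      Matrix.nonsing_inv_mul _ ((Matrix.isUnit_iff_isUnit_det _).mp h)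
    have hblk : ∀ m s, ∑ k, blk B m k * blk (1 + lamK Ξ X) k s
        = if m = s then 1 else 0 := by
      intro m s
      rw [← blk_mul, hB, blk_one]
    have key : ∀ m s, ∑ k, blk B m k * blk (lamK Ξ X) k s
        = (if m = s then 1 else 0) - blk B m s := by
      intro m s
      have h1 := hblk m s
      have h2 : ∀ k, blk B m k * blk (1 + lamK Ξ X) k s
          = (if k = s then blk B m s else 0) + blk B m k * blk (lamK Ξ X) k s := by
        intro k
        rw [blk_add, blk_one, mul_add, mul_ite, mul_one, mul_zero]
        by_cases hk : k = s <;> simp [hk]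
      rw [Finset.sum_congr rfl fun k _ => h2 k, Finset.sum_add_distrib,
        Finset.sum_ite_eq' Finset.univ s (fun _ => blk B m s)] at h1
      simp only [Finset.mem_univ, if_true] at h1
      linear_combination (norm := module) h1
    have qsum : ∀ s, ∑ k, qmap Ξ X k * blk (lamK Ξ X) k s
        = X s - qmap Ξ X s := by
      intro s
      have : ∀ k, qmap Ξ X k * blk (lamK Ξ X) k s
          = ∑ m, X m * (blk B m k * blk (lamK Ξ X) k s) := by
        intro k
        rw [qmap, Finset.sum_mul]
        exact Finset.sum_congr rfl fun m _ => by rw [mul_assoc]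
      rw [Finset.sum_congr rfl fun k _ => this k, Finset.sum_comm]
      have : ∀ m, ∑ k, X m * (blk B m k * blk (lamK Ξ X) k s)
          = X m * ((if m = s then 1 else 0) - blk B m s) := by
        intro m
        rw [← Finset.mul_sum, key]
      rw [Finset.sum_congr rfl fun m _ => this m]
      simp only [mul_sub, mul_ite, mul_one, mul_zero]
      rw [Finset.sum_sub_distrib, Finset.sum_ite_eq' Finset.univ s (fun m => X m)]
      simp only [Finset.mem_univ, if_true]
      rw [qmap]
    rw [mul_add, mul_one, lamK_mul_lamK J Ξ hΞ]
    simp only [qsum]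
    rw [lamK, lamK, ← Finset.sum_add_distrib]
    refine Finset.sum_congr rfl fun s _ => ?_
    rw [← Matrix.kronecker_add, add_sub_cancel]
  · intro h
    set B := (1 - lamK Ξ X)⁻¹ with hBdef
    have hB : B * (1 - lamK Ξ X) = 1 :=
      Matrix.nonsing_inv_mul _ ((Matrix.isUnit_iff_isUnit_det _).mp h)
    have hblk : ∀ m s, ∑ k, blk B m k * blk (1 - lamK Ξ X) k s
        = if m = s then 1 else 0 := by
      intro m s
      rw [← blk_mul, hB, blk_one]
    have key : ∀ m s, ∑ k, blk B m k * blk (lamK Ξ X) k s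
        = blk B m s - (if m = s then 1 else 0) := by
      intro m s
      have h1 := hblk m s
      have h2 : ∀ k, blk B m k * blk (1 - lamK Ξ X) k s
          = (if k = s then blk B m s else 0) - blk B m k * blk (lamK Ξ X) k s := by
        intro k
        rw [blk_sub, blk_one, mul_sub, mul_ite, mul_one, mul_zero]
        by_cases hk : k = s <;> simp [hk]
      rw [Finset.sum_congr rfl fun k _ => h2 k, Finset.sum_sub_distrib,
        Finset.sum_ite_eq' Finset.univ s (fun _ => blk B m s)] at h1
      simp only [Finset.mem_univ, if_true] at h1
      rw [sub_eq_iff_eq_add] at h1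
      rw [h1]; abel
    have psum : ∀ s, ∑ k, pmap Ξ X k * blk (lamK Ξ X) k s
        = pmap Ξ X s - X s := by
      intro s
      have : ∀ k, pmap Ξ X k * blk (lamK Ξ X) k s
          = ∑ m, X m * (blk B m k * blk (lamK Ξ X) k s) := by
        intro k
        rw [pmap, Finset.sum_mul]
        exact Finset.sum_congr rfl fun m _ => by rw [mul_assoc]
      rw [Finset.sum_congr rfl fun k _ => this k, Finset.sum_comm]
      have : ∀ m, ∑ k, X m * (blk B m k * blk (lamK Ξ X) k s)
          = X m * (blk B m s - (if m = s then 1 else 0)) := by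
        intro m
        rw [← Finset.mul_sum, key]
      rw [Finset.sum_congr rfl fun m _ => this m]
      simp only [mul_sub, mul_ite, mul_one, mul_zero]
      rw [Finset.sum_sub_distrib, Finset.sum_ite_eq' Finset.univ s (fun m => X m)]
      simp only [Finset.mem_univ, if_true]
      rw [pmap]
    rw [mul_sub, mul_one, lamK_mul_lamK J Ξ hΞ]
    simp only [psum]
    rw [lamK, lamK, ← Finset.sum_sub_distrib]
    refine Finset.sum_congr rfl fun s _ => ?_
    rw [← kronecker_sub'', sub_sub_cancel]
end
end

section
/- Let J = (J_1,…,J_g) ∈ M_d(ℂ)^g be linearly independent and suppose the span of J_1,…,J_g is closed under multiplication, with Ξ ∈ M_g(ℂ)^g the unique tuple satisfying J_k J_j = Σ_{s=1}^g (Ξ_j)_{k,s} J_s. Then for every n and every X ∈ M_n(ℂ)^g with L_J(X) positive semidefinite, the matrix I + Λ_Ξ(X) is invertible; hence the convexotonic map q(X) = X(I+Λ_Ξ(X))^{-1} is defined at every point of the free spectrahedron D_J. -/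
open scoped Kronecker Matrix Matrix.Norms.L2Operator ComplexOrder

noncomputable section

private lemma sum_reorder4A {M : Type*} [AddCommMonoid M] {i1 i2 i3 i4 : Type*}
    [Fintype i1] [Fintype i2] [Fintype i3] [Fintype i4] (f : i1 → i2 → i3 → i4 → M) :
    (∑ b, ∑ k, ∑ j, ∑ s, f b k j s) = ∑ j, ∑ s, ∑ k, ∑ b, f b k j s := by
  rw [Finset.sum_comm]
  conv_lhs => enter [2, k]; rw [Finset.sum_comm]
  conv_lhs => enter [2, k, 2, j]; rw [Finset.sum_comm]
  rw [Finset.sum_comm]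
  conv_lhs => enter [2, j]; rw [Finset.sum_comm]

private lemma sum_reorder4B {M : Type*} [AddCommMonoid M] {i1 i2 i3 i4 : Type*}
    [Fintype i1] [Fintype i2] [Fintype i3] [Fintype i4] (f : i1 → i2 → i3 → i4 → M) :
    (∑ a, ∑ b, ∑ c, ∑ e, f a b c e) = ∑ e, ∑ b, ∑ c, ∑ a, f a b c e := by
  rw [Finset.sum_comm]
  conv_lhs => enter [2, b]; rw [Finset.sum_comm]
  conv_lhs => enter [2, b, 2, c]; rw [Finset.sum_comm]
  conv_lhs => enter [2, b]; rw [Finset.sum_comm]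
  rw [Finset.sum_comm]

/-- if `J` is linearly independent with span closed under
multiplication and `J_k J_j = Σ_s (Ξ_j)_{k,s} J_s`, then `I + Λ_Ξ(X)` is
invertible at every point of the free spectrahedron `D_J`. -/
theorem qmap_defined_on_spectrahedron {g d : ℕ}
    (J : Fin g → Matrix (Fin d) (Fin d) ℂ)
    (Ξ : Fin g → Matrix (Fin g) (Fin g) ℂ)
    (hli : LinearIndependent ℂ J)
    (hmul : ∀ k j, J k * J j ∈ Submodule.span ℂ (Set.range J))
    (hΞ : ∀ k j, J k * J j = ∑ s, (Ξ j) k s • J s) :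
    ∀ (n : ℕ) (X : Fin g → Matrix (Fin n) (Fin n) ℂ),
      (Lpen J X).PosSemidef → IsUnit (1 + lamK Ξ X) := by
  intro n X hpsd
  by_contra hunit
  -- the transpose of `1 + Λ_Ξ(X)` is singular
  have hdet : ((1 + lamK Ξ X)ᵀ).det = 0 := by
    rw [Matrix.det_transpose]
    by_contra h
    exact hunit ((Matrix.isUnit_iff_isUnit_det _).2 (isUnit_iff_ne_zero.2 h))
  obtain ⟨v, hv0, hv⟩ := (Matrix.exists_mulVec_eq_zero_iff).2 hdet
  -- rewrite the kernel equation
  have hΛv : (lamK Ξ X)ᵀ *ᵥ v = -v := by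
    rw [Matrix.transpose_add, Matrix.transpose_one, Matrix.add_mulVec,
      Matrix.one_mulVec] at hv
    rw [eq_neg_iff_add_eq_zero, add_comm]
    exact hv
  have hv' : ∀ (t : Fin g) (i : Fin n),
      ∑ s, ∑ k, (∑ j, Ξ j s t * X j k i) * v (s, k) = - v (t, i) := by
    intro t i
    have h := congrFun hΛv (t, i)
    simpa [Matrix.mulVec, dotProduct, lamK, Matrix.sum_apply,
      Matrix.transpose_apply, Matrix.kroneckerMap_apply, Fintype.sum_prod_type,
      Finset.sum_mul] using h
  -- choose a column index making `w` nonzero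
  have hex : ∃ (c a : Fin d) (i : Fin n), (∑ s, J s c a * v (s, i)) ≠ 0 := by
    by_contra h
    push_neg at h
    apply hv0
    funext p
    obtain ⟨s0, i0⟩ := p
    refine Fintype.linearIndependent_iff.1 hli (fun s => v (s, i0)) ?_ s0
    ext c a
    simpa [Matrix.sum_apply, mul_comm] using h c a i0
  obtain ⟨c, a0, i0, hca⟩ := hex
  set w : Fin d × Fin n → ℂ := fun p => ∑ s, J s c p.1 * v (s, p.2) with hw
  have hw0 : w ≠ 0 := by
    intro h
    exact hca (by simpa [hw] using congrFun h (a0, i0))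
  -- entrywise multiplication relation for `J`
  have hΞ' : ∀ (s j : Fin g) (b a : Fin d),
      ∑ t, J s c t * J j t a = ∑ t, Ξ j s t * J t c a := by
    intro s j b a
    have h := congrFun (congrFun (hΞ s j) c) a
    simpa [Matrix.mul_apply, Matrix.sum_apply] using h
  -- the key eigen-equation for `Λ_{Jᵀ}(Xᵀ)`
  have hkey : lamK (fun j => (J j)ᵀ) (fun j => (X j)ᵀ) *ᵥ w = -w := by
    funext p
    obtain ⟨a, i⟩ := p
    have lhs_eq : (lamK (fun j => (J j)ᵀ) (fun j => (X j)ᵀ) *ᵥ w) (a, i)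
        = ∑ b, ∑ k, (∑ j, J j b a * X j k i) * (∑ s, J s c b * v (s, k)) := by
      simp [Matrix.mulVec, dotProduct, lamK, Matrix.sum_apply,
        Matrix.transpose_apply, Matrix.kroneckerMap_apply, Fintype.sum_prod_type, hw]
    rw [lhs_eq]
    have step1 : ∑ b, ∑ k, (∑ j, J j b a * X j k i) * (∑ s, J s c b * v (s, k))
        = ∑ b, ∑ k, ∑ j, ∑ s, (J s c b * J j b a) * (X j k i * v (s, k)) := by
      refine Finset.sum_congr rfl fun b _ => Finset.sum_congr rfl fun k _ => ?_
      rw [Finset.sum_mul]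
      refine Finset.sum_congr rfl fun j _ => ?_
      rw [Finset.mul_sum]
      exact Finset.sum_congr rfl fun s _ => by ring
    rw [step1, sum_reorder4A]
    have step3 : ∑ j, ∑ s, ∑ k, ∑ b, (J s c b * J j b a) * (X j k i * v (s, k))
        = ∑ j, ∑ s, ∑ k, ∑ t, (Ξ j s t * J t c a) * (X j k i * v (s, k)) := by
      refine Finset.sum_congr rfl fun j _ => Finset.sum_congr rfl fun s _ =>
        Finset.sum_congr rfl fun k _ => ?_
      rw [← Finset.sum_mul, ← Finset.sum_mul, hΞ' s j a a]
    rw [step3, sum_reorder4B]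
    have step5 : ∑ t, ∑ s, ∑ k, ∑ j, (Ξ j s t * J t c a) * (X j k i * v (s, k))
        = ∑ t, J t c a * (∑ s, ∑ k, (∑ j, Ξ j s t * X j k i) * v (s, k)) := by
      refine Finset.sum_congr rfl fun t _ => ?_
      rw [Finset.mul_sum]
      refine Finset.sum_congr rfl fun s _ => ?_
      rw [Finset.mul_sum]
      refine Finset.sum_congr rfl fun k _ => ?_
      rw [Finset.sum_mul, Finset.mul_sum]
      exact Finset.sum_congr rfl fun j _ => by ring
    rw [step5]
    have step6 : ∑ t, J t c a * (∑ s, ∑ k, (∑ j, Ξ j s t * X j k i) * v (s, k))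
        = ∑ t, J t c a * (- v (t, i)) :=
      Finset.sum_congr rfl fun t _ => by rw [hv' t i]
    rw [step6]
    simp [hw]
  -- `L_{Jᵀ}(Xᵀ)` is positive semidefinite
  have hlamT : lamK (fun j => (J j)ᵀ) (fun j => (X j)ᵀ) = (lamK J X)ᵀ := by
    ext p q
    simp [lamK, Matrix.sum_apply, Matrix.transpose_apply, Matrix.kroneckerMap_apply]
  have hLT : Lpen (fun j => (J j)ᵀ) (fun j => (X j)ᵀ) = (Lpen J X)ᵀ := by
    ext p q
    simp [Lpen, Matrix.add_apply, Matrix.one_apply, lamK, Matrix.sum_apply,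
      Matrix.transpose_apply, Matrix.conjTranspose_apply, Matrix.kroneckerMap_apply,
      star_sum, Prod.ext_iff]
    simp only [eq_comm]
  have hps' : (Lpen (fun j => (J j)ᵀ) (fun j => (X j)ᵀ)).PosSemidef := by
    rw [hLT]; exact hpsd.transpose
  -- quadratic form contradiction
  set Λ := lamK (fun j => (J j)ᵀ) (fun j => (X j)ᵀ) with hΛdef
  have hLw : Lpen (fun j => (J j)ᵀ) (fun j => (X j)ᵀ) *ᵥ w = Λᴴ *ᵥ w := by
    rw [Lpen, Matrix.add_mulVec, Matrix.add_mulVec, Matrix.one_mulVec, ← hΛdef, hkey]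
    funext p
    simp
  have hdot : star w ⬝ᵥ (Lpen (fun j => (J j)ᵀ) (fun j => (X j)ᵀ) *ᵥ w)
      = -(star w ⬝ᵥ w) := by
    rw [hLw, Matrix.mulVec_conjTranspose, Matrix.star_dotProduct_star,
      ← Matrix.dotProduct_mulVec, hkey]
    rw [dotProduct_neg, star_neg, ← Matrix.star_dotProduct]
  have hquad := hps'.dotProduct_mulVec_nonneg w
  rw [hdot] at hquad
  have hr0 : (0 : ℂ) ≤ star w ⬝ᵥ w := dotProduct_star_self_nonneg w
  have hrne : star w ⬝ᵥ w ≠ 0 := fun h => hw0 (dotProduct_star_self_eq_zero.1 h)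
  exact hrne (le_antisymm (neg_nonneg.1 hquad) hr0)
end
end
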